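/- Let q ≥ 3 and L ≥ 2 be fixed integers. For every ε > 0 there exists δ > 0 with the following property: for every natural number s ≥ 1 there exist constants M₀ = M₀(s) and c = c(s) such that for every n ≥ 1 and every code C ⊆ [q]^n with |C| = M ≥ M₀, at least one of the following holds: (1) there exists a subcode C' ⊆ C with |C'| ≥ s and radh(C') ≤ 1 − 1/q − δ; or (2) there exist at least M^L − c·M^{L−1} ordered L-tuples (c_1,...,c_L) of pairwise distinct codewords of C such that |type_u(c_1,...,c_L) − q^{−L}| ≤ ε for every u ∈ [q]^L, and consequently |rad_ω(φ(c_1),...,φ(c_L)) − f(U_q,ω)| ≤ q^L ε for every probability distribution ω on [L]. -/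

import Mathlib

open Finset
open scoped Classical

/-- A probability distribution on a finite type. -/
def IsDist {α : Type*} [Fintype α] (P : α → ℝ) : Prop :=
  (∀ a, 0 ≤ P a) ∧ ∑ a, P a = 1

/-- The embedding `φ : [q] → ∂Δ` sending `x` to the standard basis vector `e_x`. -/
noncomputable def phi (q : ℕ) (x : Fin q) : Fin q → ℝ := fun k => if k = x then 1 else 0

/-- `d(x,y) = (1/2) ∑_j ‖x(j) − y(j)‖₁` for blocks in `ℝ^q`. -/
noncomputable def dvec {q n : ℕ} (x y : Fin n → Fin q → ℝ) : ℝ :=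
  (1 / 2) * ∑ j, ∑ k, |x j k - y j k|

/-- The weighted average radius `rad_ω(x₁,…,x_L) = (1/n) inf_{y∈Δⁿ} ∑_i ω(i) d(xᵢ,y)`. -/
noncomputable def radOmega {q n L : ℕ} (ω : Fin L → ℝ) (xs : Fin L → Fin n → Fin q → ℝ) : ℝ :=
  (1 / (n : ℝ)) *
    sInf {r : ℝ | ∃ y : Fin n → Fin q → ℝ, (∀ j, IsDist (y j)) ∧ r = ∑ i, ω i * dvec (xs i) y}

/-- The Chebyshev radius of a code: `radh(C) = (1/n) min_{y∈[q]^n} max_{c∈C} d_H(c,y)`. -/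
noncomputable def radhCode {q n : ℕ} (C : Finset (Fin n → Fin q)) : ℝ :=
  (1 / (n : ℝ)) * ⨅ y : Fin n → Fin q, sSup {d : ℝ | ∃ c ∈ C, d = (hammingDist c y : ℝ)}

/-- `max_ω(x₁,…,x_L) = max_{x∈[q]} ∑_{i : xᵢ = x} ω(i)`. -/
noncomputable def maxOmega {q L : ℕ} (ω : Fin L → ℝ) (x : Fin L → Fin q) : ℝ :=
  ⨆ a : Fin q, ∑ i ∈ Finset.univ.filter (fun i => x i = a), ω i

/-- `f(P,ω) = 1 − ∑_{x∈[q]^L} (∏ᵢ P(xᵢ)) · max_ω(x)`. -/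
noncomputable def fF {q L : ℕ} (P : Fin q → ℝ) (ω : Fin L → ℝ) : ℝ :=
  1 - ∑ x : Fin L → Fin q, (∏ i, P (x i)) * maxOmega ω x

/-- `type_u(c₁,…,c_L) = (1/n)·|{i : (c₁(i),…,c_L(i)) = u}|`. -/
noncomputable def typeu {q n L : ℕ} (cs : Fin L → Fin n → Fin q) (u : Fin L → Fin q) : ℝ :=
  ((Finset.univ.filter fun j : Fin n => ∀ i, cs i j = u i).card : ℝ) / (n : ℝ)

section Aux
variable {q n L : ℕ}

lemma IsDist.le_one' {α : Type*} [Fintype α] {P : α → ℝ} (h : IsDist P) (a : α) : P a ≤ 1 := by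
  rw [← h.2]
  exact Finset.single_le_sum (fun b _ => h.1 b) (mem_univ a)










lemma weight_le_maxOmega (ω : Fin L → ℝ) (x : Fin L → Fin q) (hq : 0 < q) (a : Fin q) :
    ∑ i ∈ Finset.univ.filter (fun i => x i = a), ω i ≤ maxOmega ω x := by
  have : Nonempty (Fin q) := ⟨⟨0, hq⟩⟩
  exact le_ciSup (f := fun a : Fin q => ∑ i ∈ Finset.univ.filter (fun i => x i = a), ω i)
    (Set.Finite.bddAbove (Set.finite_range _)) a

lemma maxOmega_exists (ω : Fin L → ℝ) (x : Fin L → Fin q) (hq : 0 < q) :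
    ∃ a : Fin q, maxOmega ω x = ∑ i ∈ Finset.univ.filter (fun i => x i = a), ω i := by
  have : Nonempty (Fin q) := ⟨⟨0, hq⟩⟩
  obtain ⟨a, -, ha⟩ := Finset.exists_max_image (univ : Finset (Fin q))
    (fun a => ∑ i ∈ Finset.univ.filter (fun i => x i = a), ω i) ⟨⟨0, hq⟩, mem_univ _⟩
  refine ⟨a, le_antisymm (ciSup_le fun b => ha b (mem_univ b)) (weight_le_maxOmega ω x hq a)⟩

lemma maxOmega_nonneg (ω : Fin L → ℝ) (x : Fin L → Fin q) (hq : 0 < q) (hω : IsDist ω) : 0 ≤ maxOmega ω x := by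
  refine le_trans ?_ (weight_le_maxOmega ω x hq ⟨0, hq⟩)
  exact Finset.sum_nonneg fun i _ => hω.1 i

lemma maxOmega_le_one (ω : Fin L → ℝ) (x : Fin L → Fin q) (hq : 0 < q) (hω : IsDist ω) : maxOmega ω x ≤ 1 := by
  have : Nonempty (Fin q) := ⟨⟨0, hq⟩⟩
  refine ciSup_le fun a => ?_
  rw [← hω.2]
  exact Finset.sum_le_sum_of_subset_of_nonneg (filter_subset _ _) fun i _ _ => hω.1 i


lemma isDist_phi (hq : 0 < q) (a : Fin q) : IsDist (phi q a) := by
  constructor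
  · intro k
    unfold phi
    split <;> norm_num
  · unfold phi
    simp

lemma dvec_phi (d : Fin n → Fin q) (y : Fin n → Fin q → ℝ) (hy : ∀ j, IsDist (y j)) :
    dvec (fun j => phi q (d j)) y = ∑ j, (1 - y j (d j)) := by
  unfold dvec
  rw [Finset.mul_sum]
  refine Finset.sum_congr rfl fun j _ => ?_
  have h1 : ∑ k, |phi q (d j) k - y j k|
      = |phi q (d j) (d j) - y j (d j)| + ∑ k ∈ univ.erase (d j), |phi q (d j) k - y j k| := by
    exact (Finset.add_sum_erase _ _ (mem_univ (d j))).symm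
  have h2 : |phi q (d j) (d j) - y j (d j)| = 1 - y j (d j) := by
    unfold phi
    rw [if_pos rfl]
    exact abs_of_nonneg (by linarith [(hy j).le_one' (d j)])
  have h3 : ∑ k ∈ univ.erase (d j), |phi q (d j) k - y j k|
      = ∑ k ∈ univ.erase (d j), y j k := by
    refine Finset.sum_congr rfl fun k hk => ?_
    have hkd : k ≠ d j := (Finset.mem_erase.1 hk).1
    unfold phi
    rw [if_neg hkd, zero_sub, abs_neg, abs_of_nonneg ((hy j).1 k)]
  have h4 : ∑ k ∈ univ.erase (d j), y j k = 1 - y j (d j) := by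
    rw [Finset.sum_erase_eq_sub (mem_univ (d j)), (hy j).2]
  rw [h1, h2, h3, h4]
  ring

lemma weighted_sum_eq (ω : Fin L → ℝ) (hω : IsDist ω) (cs : Fin L → Fin n → Fin q)
    (y : Fin n → Fin q → ℝ) (hy : ∀ j, IsDist (y j)) :
    ∑ i, ω i * dvec (fun j => phi q (cs i j)) y
      = ∑ j, (1 - ∑ a, y j a * ∑ i ∈ Finset.univ.filter (fun i => cs i j = a), ω i) := by
  have h1 : ∀ i : Fin L, ω i * dvec (fun j => phi q (cs i j)) y
      = ∑ j, ω i * (1 - y j (cs i j)) := fun i => by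
    rw [dvec_phi (fun j => cs i j) y hy, Finset.mul_sum]
  rw [Finset.sum_congr rfl fun i _ => h1 i, Finset.sum_comm]
  refine Finset.sum_congr rfl fun j _ => ?_
  have h2 : ∑ i, ω i * (1 - y j (cs i j)) = 1 - ∑ i, ω i * y j (cs i j) := by
    simp_rw [mul_one_sub]
    rw [Finset.sum_sub_distrib, hω.2]
  rw [h2]
  congr 1
  rw [← Finset.sum_fiberwise univ (fun i => cs i j) (fun i => ω i * y j (cs i j))]
  refine Finset.sum_congr rfl fun a _ => ?_
  rw [Finset.mul_sum]
  refine Finset.sum_congr rfl fun i hi => ?_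
  rw [(Finset.mem_filter.1 hi).2]
  ring

lemma radOmega_eq (hq : 0 < q) (hn : 0 < n) (ω : Fin L → ℝ) (hω : IsDist ω)
    (cs : Fin L → Fin n → Fin q) :
    radOmega ω (fun i j => phi q (cs i j))
      = 1 - ∑ u : Fin L → Fin q, typeu cs u * maxOmega ω u := by
  classical
  set W : Fin n → Fin q → ℝ :=
    fun j a => ∑ i ∈ Finset.univ.filter (fun i => cs i j = a), ω i with hW
  set V : ℝ := ∑ j, (1 - maxOmega ω (fun i => cs i j)) with hV
  set S : Set ℝ := {r : ℝ | ∃ y : Fin n → Fin q → ℝ,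
    (∀ j, IsDist (y j)) ∧ r = ∑ i, ω i * dvec ((fun i j => phi q (cs i j)) i) y} with hS
  have hVmem : V ∈ S := by
    choose aa haa using fun j => maxOmega_exists ω (fun i => cs i j) hq
    refine ⟨fun j => phi q (aa j), fun j => isDist_phi hq (aa j), ?_⟩
    rw [weighted_sum_eq ω hω cs _ (fun j => isDist_phi hq (aa j))]
    rw [hV]
    refine (Finset.sum_congr rfl fun j _ => ?_).symm
    congr 1
    rw [haa j]
    rw [show ∑ a, phi q (aa j) a * W j a = W j (aa j) by
      unfold phi
      rw [Finset.sum_congr rfl (fun a _ => by rw [ite_mul, one_mul, zero_mul]),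
        Finset.sum_ite_eq' univ (aa j) (W j)]
      simp]
  have hVlb : ∀ r ∈ S, V ≤ r := by
    rintro r ⟨y, hy, rfl⟩
    rw [weighted_sum_eq ω hω cs y hy, hV]
    refine Finset.sum_le_sum fun j _ => ?_
    have : ∑ a, y j a * W j a ≤ maxOmega ω (fun i => cs i j) := by
      calc ∑ a, y j a * W j a
          ≤ ∑ a, y j a * maxOmega ω (fun i => cs i j) := by
            refine Finset.sum_le_sum fun a _ => ?_
            exact mul_le_mul_of_nonneg_left (weight_le_maxOmega ω _ hq a) ((hy j).1 a)
        _ = maxOmega ω (fun i => cs i j) := by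
            rw [← Finset.sum_mul, (hy j).2, one_mul]
    linarith
  have hinf : sInf S = V := le_antisymm (csInf_le ⟨V, hVlb⟩ hVmem) (le_csInf ⟨V, hVmem⟩ hVlb)
  unfold radOmega
  rw [← hS, hinf, hV]
  -- regroup the sum over coordinates by column pattern
  have hregroup : ∑ j, (1 - maxOmega ω (fun i => cs i j))
      = ∑ u : Fin L → Fin q,
          ((Finset.univ.filter fun j : Fin n => (fun i => cs i j) = u).card : ℝ)
            * (1 - maxOmega ω u) := by
    rw [← Finset.sum_fiberwise univ (fun j => (fun i => cs i j)) (fun j => 1 - maxOmega ω (fun i => cs i j))]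
    refine Finset.sum_congr rfl fun u _ => ?_
    rw [Finset.sum_congr rfl fun j hj => by rw [(Finset.mem_filter.1 hj).2]]
    rw [Finset.sum_const, nsmul_eq_mul]
  rw [hregroup]
  have hcount : ∀ u : Fin L → Fin q,
      (Finset.univ.filter fun j : Fin n => (fun i => cs i j) = u)
        = (Finset.univ.filter fun j : Fin n => ∀ i, cs i j = u i) := by
    intro u
    refine Finset.filter_congr fun j _ => ?_
    simp [funext_iff]
  have hn' : (n:ℝ) ≠ 0 := Nat.cast_ne_zero.2 hn.ne'
  have htot : ∑ u : Fin L → Fin q,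
      (Finset.univ.filter fun j : Fin n => (fun i => cs i j) = u).card = n := by
    rw [← Finset.card_eq_sum_card_fiberwise
      (f := fun j : Fin n => (fun i => cs i j)) (s := univ) (t := univ) (fun j _ => mem_univ _)]
    simp
  have hc : ∀ u : Fin L → Fin q,
      ((Finset.univ.filter fun j : Fin n => (fun i => cs i j) = u).card : ℝ)
        = n * typeu cs u := by
    intro u
    unfold typeu
    rw [hcount u]
    field_simp
  have htypesum : ∑ u : Fin L → Fin q, typeu cs u = 1 := by
    have : ∑ u : Fin L → Fin q, (n : ℝ) * typeu cs u = n := by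
      rw [Finset.sum_congr rfl fun u _ => (hc u).symm, ← Nat.cast_sum, htot]
    rw [← Finset.mul_sum] at this
    field_simp at this
    exact this
  rw [Finset.sum_congr rfl fun u _ => by rw [hc u]]
  rw [show ∑ u : Fin L → Fin q, (n:ℝ) * typeu cs u * (1 - maxOmega ω u)
      = (n:ℝ) * ∑ u : Fin L → Fin q, typeu cs u * (1 - maxOmega ω u) by
    rw [Finset.mul_sum]
    exact Finset.sum_congr rfl fun u _ => by ring]
  rw [show ∑ u : Fin L → Fin q, typeu cs u * (1 - maxOmega ω u)
      = 1 - ∑ u : Fin L → Fin q, typeu cs u * maxOmega ω u by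
    rw [Finset.sum_congr rfl fun u _ => mul_one_sub (typeu cs u) (maxOmega ω u),
      Finset.sum_sub_distrib, htypesum]]
  rw [← mul_assoc]
  rw [one_div, inv_mul_cancel₀ hn', one_mul]

lemma omega_bound (hq : 0 < q) (hn : 0 < n) {ε : ℝ} (cs : Fin L → Fin n → Fin q)
    (htype : ∀ u : Fin L → Fin q, |typeu cs u - 1 / (q : ℝ) ^ L| ≤ ε)
    (ω : Fin L → ℝ) (hω : IsDist ω) :
    |radOmega ω (fun i j => phi q (cs i j)) - fF (fun _ : Fin q => 1 / (q : ℝ)) ω|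
      ≤ (q : ℝ) ^ L * ε := by
  rw [radOmega_eq hq hn ω hω cs]
  unfold fF
  have hprod : (∏ _i : Fin L, (1 / (q:ℝ))) = 1 / (q:ℝ)^L := by
    rw [Finset.prod_const]
    simp [one_div, inv_pow]
  simp only [hprod]
  have : (1 - ∑ u : Fin L → Fin q, typeu cs u * maxOmega ω u) -
      (1 - ∑ u : Fin L → Fin q, (1 / (q:ℝ)^L) * maxOmega ω u)
      = ∑ u : Fin L → Fin q, (1/(q:ℝ)^L - typeu cs u) * maxOmega ω u := by
    rw [Finset.sum_congr rfl fun u _ =>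
      sub_mul (1/(q:ℝ)^L) (typeu cs u) (maxOmega ω u), Finset.sum_sub_distrib]
    ring
  rw [this]
  calc |∑ u : Fin L → Fin q, (1/(q:ℝ)^L - typeu cs u) * maxOmega ω u|
      ≤ ∑ u : Fin L → Fin q, |(1/(q:ℝ)^L - typeu cs u) * maxOmega ω u| :=
        Finset.abs_sum_le_sum_abs _ _
    _ ≤ ∑ _u : Fin L → Fin q, ε * 1 := by
        refine Finset.sum_le_sum fun u _ => ?_
        rw [abs_mul]
        refine mul_le_mul ?_ ?_ (abs_nonneg _)
          (le_trans (abs_nonneg (typeu cs u - 1/(q:ℝ)^L)) (htype u))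
        · rw [abs_sub_comm]
          exact htype u
        · rw [abs_of_nonneg (maxOmega_nonneg ω u hq hω)]
          exact maxOmega_le_one ω u hq hω
    _ = (q:ℝ)^L * ε := by
        rw [Finset.sum_const, nsmul_eq_mul, mul_one]
        simp [Fintype.card_fun]

lemma radh_le (hn : 0 < n) (C' : Finset (Fin n → Fin q)) (hne : C'.Nonempty)
    (y : Fin n → Fin q) (D : ℝ) (hD : ∀ c ∈ C', (hammingDist c y : ℝ) ≤ D) :
    radhCode C' ≤ D / n := by
  unfold radhCode
  have hSet : ∀ z : Fin n → Fin q,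
      {d : ℝ | ∃ c ∈ C', d = (hammingDist c z : ℝ)}
        = (fun c => (hammingDist c z : ℝ)) '' (C' : Set (Fin n → Fin q)) := by
    intro z
    ext d
    simp [eq_comm]
  have hbdd : ∀ z : Fin n → Fin q,
      BddAbove {d : ℝ | ∃ c ∈ C', d = (hammingDist c z : ℝ)} := by
    intro z
    rw [hSet z]
    exact (C'.finite_toSet.image _).bddAbove
  have hnonempty : ∀ z : Fin n → Fin q,
      {d : ℝ | ∃ c ∈ C', d = (hammingDist c z : ℝ)}.Nonempty := by
    intro z
    obtain ⟨c, hc⟩ := hne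
    exact ⟨_, c, hc, rfl⟩
  have hlb : ∀ z : Fin n → Fin q,
      (0:ℝ) ≤ sSup {d : ℝ | ∃ c ∈ C', d = (hammingDist c z : ℝ)} := by
    intro z
    obtain ⟨c, hc⟩ := hne
    exact le_trans (Nat.cast_nonneg _) (le_csSup (hbdd z) ⟨c, hc, rfl⟩)
  have h1 : (⨅ z : Fin n → Fin q, sSup {d : ℝ | ∃ c ∈ C', d = (hammingDist c z : ℝ)})
      ≤ sSup {d : ℝ | ∃ c ∈ C', d = (hammingDist c y : ℝ)} :=
    ciInf_le ⟨0, fun r ⟨z, hz⟩ => hz ▸ hlb z⟩ y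
  have h2 : sSup {d : ℝ | ∃ c ∈ C', d = (hammingDist c y : ℝ)} ≤ D := by
    refine csSup_le (hnonempty y) ?_
    rintro d ⟨c, hc, rfl⟩
    exact hD c hc
  have hn' : (0:ℝ) < n := Nat.cast_pos.2 hn
  refine le_trans (mul_le_mul_of_nonneg_left (h1.trans h2) (by positivity)) ?_
  rw [one_div, inv_mul_eq_div]

def preCount (ℓ : ℕ) (cs : Fin L → Fin n → Fin q) (u : Fin L → Fin q) : Finset (Fin n) :=
  Finset.univ.filter (fun j => ∀ i : Fin L, (i : ℕ) < ℓ → cs i j = u i)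

noncomputable def typePre (ℓ : ℕ) (cs : Fin L → Fin n → Fin q) (u : Fin L → Fin q) : ℝ :=
  ((preCount ℓ cs u).card : ℝ) / (n : ℝ)

lemma preCount_congr {ℓ : ℕ} {cs cs' : Fin L → Fin n → Fin q} (u : Fin L → Fin q)
    (h : ∀ i : Fin L, (i : ℕ) < ℓ → cs i = cs' i) : preCount ℓ cs u = preCount ℓ cs' u := by
  unfold preCount
  refine Finset.filter_congr fun j _ => ?_
  constructor
  · intro hj i hi; rw [← h i hi]; exact hj i hi
  · intro hj i hi; rw [h i hi]; exact hj i hi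

lemma typePre_congr {ℓ : ℕ} {cs cs' : Fin L → Fin n → Fin q} (u : Fin L → Fin q)
    (h : ∀ i : Fin L, (i : ℕ) < ℓ → cs i = cs' i) : typePre ℓ cs u = typePre ℓ cs' u := by
  unfold typePre
  rw [preCount_congr u h]

lemma preCount_zero (cs : Fin L → Fin n → Fin q) (u : Fin L → Fin q) :
    preCount 0 cs u = Finset.univ := by
  unfold preCount
  refine Finset.filter_true_of_mem fun j _ => fun i hi => absurd hi (Nat.not_lt_zero _)

lemma typePre_zero (hn : 0 < n) (cs : Fin L → Fin n → Fin q) (u : Fin L → Fin q) :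
    typePre 0 cs u = 1 := by
  unfold typePre
  rw [preCount_zero, Finset.card_univ, Fintype.card_fin]
  field_simp

lemma preCount_top (cs : Fin L → Fin n → Fin q) (u : Fin L → Fin q) :
    preCount L cs u = Finset.univ.filter (fun j => ∀ i, cs i j = u i) := by
  unfold preCount
  refine Finset.filter_congr fun j _ => ?_
  constructor
  · intro h i; exact h i i.isLt
  · intro h i _; exact h i

lemma typePre_nonneg (ℓ : ℕ) (cs : Fin L → Fin n → Fin q) (u : Fin L → Fin q) :
    0 ≤ typePre ℓ cs u := by
  unfold typePre; positivity

lemma preCount_card_le (ℓ : ℕ) (cs : Fin L → Fin n → Fin q) (u : Fin L → Fin q) :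
    (preCount ℓ cs u).card ≤ n := by
  calc (preCount ℓ cs u).card ≤ (Finset.univ : Finset (Fin n)).card :=
        Finset.card_le_card (Finset.filter_subset _ _)
    _ = n := by simp

lemma typePre_le_one (hn : 0 < n) (ℓ : ℕ) (cs : Fin L → Fin n → Fin q) (u : Fin L → Fin q) :
    typePre ℓ cs u ≤ 1 := by
  unfold typePre
  rw [div_le_one (by exact_mod_cast hn)]
  exact_mod_cast preCount_card_le ℓ cs u

lemma preCount_split {m : ℕ} (hm : m < L) (cs : Fin L → Fin n → Fin q) (u : Fin L → Fin q) :
    (preCount m cs u).card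
      = ∑ a : Fin q, (preCount (m + 1) cs (Function.update u ⟨m, hm⟩ a)).card := by
  rw [Finset.card_eq_sum_card_fiberwise
    (f := fun j => cs ⟨m, hm⟩ j) (t := Finset.univ) (fun j _ => mem_univ _)]
  refine Finset.sum_congr rfl fun a _ => ?_
  congr 1
  ext j
  simp only [preCount, Finset.mem_filter, Finset.mem_univ, true_and]
  constructor
  · rintro ⟨h1, h2⟩ i hi
    rcases Nat.lt_succ_iff_lt_or_eq.1 hi with hi' | hi'
    · rw [Function.update_of_ne (by exact fun he => absurd (congrArg Fin.val he) (by simp; omega))]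
      exact h1 i hi'
    · have : i = ⟨m, hm⟩ := Fin.ext hi'
      rw [this, Function.update_self]
      exact h2
  · intro h
    constructor
    · intro i hi
      have hne : i ≠ ⟨m, hm⟩ := fun he => by
        rw [he] at hi; exact absurd hi (by simp)
      have := h i (Nat.lt_succ_of_lt hi)
      rwa [Function.update_of_ne hne] at this
    · have := h ⟨m, hm⟩ (Nat.lt_succ_of_le (le_refl m))
      rwa [Function.update_self] at this

lemma preCount_update {m : ℕ} (hm : m < L) (cs : Fin L → Fin n → Fin q)
    (c : Fin n → Fin q) (u : Fin L → Fin q) :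
    preCount (m + 1) (Function.update cs ⟨m, hm⟩ c) u
      = (preCount m cs u).filter (fun j => c j = u ⟨m, hm⟩) := by
  ext j
  simp only [preCount, Finset.mem_filter, Finset.mem_univ, true_and]
  constructor
  · intro h
    refine ⟨fun i hi => ?_, ?_⟩
    · have hne : i ≠ ⟨m, hm⟩ := fun he => by
        rw [he] at hi; exact absurd hi (by simp)
      have := h i (Nat.lt_succ_of_lt hi)
      rwa [Function.update_of_ne hne] at this
    · have := h ⟨m, hm⟩ (Nat.lt_succ_of_le (le_refl m))
      rwa [Function.update_self] at this
  · rintro ⟨h1, h2⟩ i hi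
    rcases Nat.lt_succ_iff_lt_or_eq.1 hi with hi' | hi'
    · have hne : i ≠ ⟨m, hm⟩ := fun he => by
        rw [he] at hi'; exact absurd hi' (by simp)
      rw [Function.update_of_ne hne]
      exact h1 i hi'
    · have : i = ⟨m, hm⟩ := Fin.ext hi'
      rw [this, Function.update_self]
      exact h2

lemma preCount_update_lower {m : ℕ} (hm : m < L) (cs : Fin L → Fin n → Fin q)
    (c : Fin n → Fin q) (u : Fin L → Fin q) :
    preCount m (Function.update cs ⟨m, hm⟩ c) u = preCount m cs u := by
  refine preCount_congr u fun i hi => ?_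
  refine Function.update_of_ne (fun he => ?_) _ _
  rw [he] at hi
  exact absurd hi (by simp)

lemma var_bound : ∀ (m : ℕ) (f : Fin m → Fin q → ℝ),
    (∀ j, ∑ v, f j v = 0) → (∀ j v, (f j v) ^ 2 ≤ 1) →
    ∑ z : Fin m → Fin q, (∑ j, f j (z j)) ^ 2 ≤ (m : ℝ) * (q : ℝ) ^ m := by
  intro m
  induction m with
  | zero =>
    intro f _ _
    simp
  | succ m ih =>
    intro f hrow hsq
    set e : Fin q × (Fin m → Fin q) ≃ (Fin (m + 1) → Fin q) :=
      Fin.consEquiv (fun _ : Fin (m + 1) => Fin q) with he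
    rw [← Equiv.sum_comp e (fun z : Fin (m+1) → Fin q => (∑ j, f j (z j)) ^ 2)]
    rw [Fintype.sum_prod_type]
    have hsplit : ∀ (v : Fin q) (z' : Fin m → Fin q),
        ∑ j, f j ((e (v, z')) j) = f 0 v + ∑ j : Fin m, f j.succ (z' j) := by
      intro v z'
      rw [Fin.sum_univ_succ]
      congr 1 <;> simp [he, Fin.consEquiv_apply]
    have key : ∀ v : Fin q,
        ∑ z' : Fin m → Fin q, (∑ j, f j ((e (v, z')) j)) ^ 2
          = (q:ℝ)^m * (f 0 v)^2 + 2 * f 0 v * (∑ z' : Fin m → Fin q, ∑ j : Fin m, f j.succ (z' j))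
            + ∑ z' : Fin m → Fin q, (∑ j : Fin m, f j.succ (z' j)) ^ 2 := by
      intro v
      rw [Finset.sum_congr rfl fun z' _ => by rw [hsplit v z', add_sq]]
      have hA : ∑ z' : Fin m → Fin q, (f 0 v) ^ 2 = (q:ℝ)^m * (f 0 v)^2 := by
        rw [Finset.sum_const, nsmul_eq_mul, Finset.card_univ,
          show Fintype.card (Fin m → Fin q) = q ^ m by simp [Fintype.card_fun]]
        push_cast
        ring
      have hAB : ∑ z' : Fin m → Fin q, 2 * f 0 v * (∑ j : Fin m, f j.succ (z' j))
          = 2 * f 0 v * ∑ z' : Fin m → Fin q, (∑ j : Fin m, f j.succ (z' j)) := by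
        rw [Finset.mul_sum]
      rw [Finset.sum_add_distrib, Finset.sum_add_distrib, hA, hAB]
    rw [Finset.sum_congr rfl fun v _ => key v]
    rw [Finset.sum_add_distrib, Finset.sum_add_distrib]
    have h1 : ∑ v : Fin q, (q:ℝ)^m * (f 0 v)^2 ≤ (q:ℝ)^m * q := by
      rw [← Finset.mul_sum]
      refine mul_le_mul_of_nonneg_left ?_ (by positivity)
      calc ∑ v : Fin q, (f 0 v)^2 ≤ ∑ _v : Fin q, (1:ℝ) :=
            Finset.sum_le_sum fun v _ => hsq 0 v
        _ = q := by simp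
    have h2 : ∑ v : Fin q, 2 * f 0 v * (∑ z' : Fin m → Fin q, ∑ j : Fin m, f j.succ (z' j))
        = 0 := by
      rw [← Finset.sum_mul]
      have : ∑ v : Fin q, 2 * f 0 v = 2 * ∑ v, f 0 v := by
        rw [Finset.mul_sum]
      rw [this, hrow 0]
      ring
    have h3 : ∑ _v : Fin q, ∑ z' : Fin m → Fin q, (∑ j : Fin m, f j.succ (z' j)) ^ 2
        ≤ (q : ℝ) * ((m:ℝ) * (q:ℝ)^m) := by
      rw [Finset.sum_const, nsmul_eq_mul]
      simp only [Finset.card_univ, Fintype.card_fin]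
      refine mul_le_mul_of_nonneg_left ?_ (by positivity)
      exact ih (fun j => f j.succ) (fun j => hrow j.succ) (fun j v => hsq j.succ v)
    have hcast : ((m:ℝ) + 1) * (q:ℝ)^(m+1) = (q:ℝ)^m * q + 0 + (q:ℝ) * ((m:ℝ) * (q:ℝ)^m) := by
      ring
    push_cast
    rw [hcast]
    gcongr <;> linarith [h2]

lemma exists_good_z (hq : 0 < q) (s : ℕ) (S : Finset (Fin n)) (t : ℝ) (ht : 0 < t)
    (hst : (s : ℝ) * n ≤ t ^ 2) (E : Finset (Fin n → Fin q)) (hE : E.card ≤ s) :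
    ∃ z : Fin n → Fin q, ∀ c ∈ E,
      ((S.card : ℝ) / q - t) ≤ ((S.filter (fun j => z j = c j)).card : ℝ) := by
  classical
  by_contra hcon
  push_neg at hcon
  have hq' : (0:ℝ) < q := by exact_mod_cast hq
  set g : (Fin n → Fin q) → (Fin n → Fin q) → ℝ :=
    fun c z => ((S.filter (fun j => z j = c j)).card : ℝ) - (S.card : ℝ) / q with hg
  have key1 : ∀ c : Fin n → Fin q, ∑ z : Fin n → Fin q, (g c z) ^ 2 ≤ (n : ℝ) * (q:ℝ)^n := by
    intro c
    set f : Fin n → Fin q → ℝ :=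
      fun j v => if j ∈ S then (if v = c j then 1 else 0) - 1 / q else 0 with hf
    have hrow : ∀ j, ∑ v, f j v = 0 := by
      intro j
      rw [hf]
      by_cases hj : j ∈ S
      · simp only [if_pos hj]
        rw [Finset.sum_sub_distrib]
        rw [Finset.sum_ite_eq' Finset.univ (c j) (fun _ => (1:ℝ))]
        simp [hq'.ne']
      · simp [hj]
    have hsq : ∀ j v, (f j v) ^ 2 ≤ 1 := by
      intro j v
      have h1q : 0 < 1 / (q:ℝ) := by positivity
      have h1q' : 1 / (q:ℝ) ≤ 1 := by
        rw [div_le_one hq']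
        exact_mod_cast hq
      rw [hf]
      by_cases hj : j ∈ S
      · simp only [if_pos hj]
        by_cases hv : v = c j
        · rw [if_pos hv]; nlinarith
        · rw [if_neg hv]; nlinarith
      · simp [hj]
    have hid : ∀ z : Fin n → Fin q, ∑ j, f j (z j) = g c z := by
      intro z
      rw [hf, hg]
      simp only []
      rw [Finset.sum_ite_mem Finset.univ S (fun j => (if z j = c j then (1:ℝ) else 0) - 1/q)]
      rw [Finset.univ_inter, Finset.sum_sub_distrib]
      congr 1
      · rw [← Finset.sum_filter]
        rw [Finset.sum_const, nsmul_eq_mul, mul_one]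
      · rw [Finset.sum_const, nsmul_eq_mul]
        ring
    calc ∑ z : Fin n → Fin q, (g c z) ^ 2
        = ∑ z : Fin n → Fin q, (∑ j, f j (z j)) ^ 2 := by
          exact (Finset.sum_congr rfl fun z _ => by rw [hid z]).symm
      _ ≤ (n : ℝ) * (q:ℝ)^n := var_bound n f hrow hsq
  have key2 : ∀ z : Fin n → Fin q, t ^ 2 < ∑ c ∈ E, (g c z) ^ 2 := by
    intro z
    obtain ⟨c, hcE, hc⟩ := hcon z
    have hneg : g c z < -t := by
      rw [hg]
      simp only []
      linarith
    have : t ^ 2 < (g c z) ^ 2 := by nlinarith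
    refine lt_of_lt_of_le this ?_
    exact Finset.single_le_sum (fun c' _ => sq_nonneg (g c' z)) hcE
  have hbig : ((q:ℝ)^n) * t ^ 2 < ((q:ℝ)^n) * ((s:ℝ) * n) := by
    have hne : (Finset.univ : Finset (Fin n → Fin q)).Nonempty := by
      refine ⟨fun _ => ⟨0, hq⟩, Finset.mem_univ _⟩
    have h1 : ∑ _z : Fin n → Fin q, t ^ 2 < ∑ z : Fin n → Fin q, ∑ c ∈ E, (g c z) ^ 2 :=
      Finset.sum_lt_sum_of_nonempty hne fun z _ => key2 z
    have h2 : ∑ z : Fin n → Fin q, ∑ c ∈ E, (g c z) ^ 2 ≤ (s : ℝ) * ((n:ℝ) * (q:ℝ)^n) := by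
      rw [Finset.sum_comm]
      calc ∑ c ∈ E, ∑ z : Fin n → Fin q, (g c z) ^ 2
          ≤ ∑ _c ∈ E, (n : ℝ) * (q:ℝ)^n := Finset.sum_le_sum fun c _ => key1 c
        _ = (E.card : ℝ) * ((n:ℝ) * (q:ℝ)^n) := by
            rw [Finset.sum_const, nsmul_eq_mul]
        _ ≤ (s : ℝ) * ((n:ℝ) * (q:ℝ)^n) := by
            refine mul_le_mul_of_nonneg_right ?_ (by positivity)
            exact_mod_cast hE
    rw [Finset.sum_const, nsmul_eq_mul] at h1
    simp only [Finset.card_univ, Fintype.card_fun, Fintype.card_fin] at h1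
    push_cast at h1
    calc ((q:ℝ)^n) * t ^ 2 < (s : ℝ) * ((n:ℝ) * (q:ℝ)^n) := by
          exact lt_of_lt_of_le h1 h2
      _ = ((q:ℝ)^n) * ((s:ℝ) * n) := by ring
  have : t ^ 2 < (s:ℝ) * n := lt_of_mul_lt_mul_left hbig (by positivity)
  linarith

noncomputable def epsTol (q L : ℕ) (ε : ℝ) (ℓ : ℕ) : ℝ := ε / (4 * (q:ℝ)) ^ (L - ℓ)

lemma epsTol_pos {q L : ℕ} {ε : ℝ} (hq : 0 < q) (hε : 0 < ε) (ℓ : ℕ) :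
    0 < epsTol q L ε ℓ := by
  unfold epsTol
  have : (0:ℝ) < q := by exact_mod_cast hq
  positivity

lemma epsTol_succ {q L : ℕ} (ε : ℝ) {m : ℕ} (hq : 0 < q) (hm : m < L) :
    epsTol q L ε m = epsTol q L ε (m+1) / (4 * q) := by
  unfold epsTol
  rw [div_div, ← pow_succ]
  congr 2
  omega

lemma epsTol_mono {q L : ℕ} {ε : ℝ} (hq : 0 < q) (hε : 0 < ε) {ℓ ℓ' : ℕ} (h : ℓ ≤ ℓ') :
    epsTol q L ε ℓ ≤ epsTol q L ε ℓ' := by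
  unfold epsTol
  have hq' : (1:ℝ) ≤ 4 * q := by
    have : (1:ℝ) ≤ q := by exact_mod_cast hq
    linarith
  refine div_le_div_of_nonneg_left hε.le (by positivity) ?_
  exact pow_le_pow_right₀ hq' (by omega)

lemma epsTol_top {q L : ℕ} (ε : ℝ) : epsTol q L ε L = ε := by
  unfold epsTol
  simp

def GoodTup (q n L : ℕ) (ε : ℝ) (ℓ : ℕ) (cs : Fin L → Fin n → Fin q) : Prop :=
  ∀ u : Fin L → Fin q, |typePre ℓ cs u - 1 / (q:ℝ)^ℓ| ≤ epsTol q L ε ℓ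

lemma goodTup_zero {q n L : ℕ} {ε : ℝ} (hq : 0 < q) (hε : 0 < ε) (hn : 0 < n)
    (cs : Fin L → Fin n → Fin q) : GoodTup q n L ε 0 cs := by
  intro u
  rw [typePre_zero hn]
  simp only [pow_zero]
  rw [div_one, sub_self, abs_zero]
  exact (epsTol_pos hq hε 0).le

lemma typePre_split {q n L : ℕ} {m : ℕ} (hm : m < L) (cs : Fin L → Fin n → Fin q)
    (u : Fin L → Fin q) :
    ∑ a : Fin q, typePre (m+1) cs (Function.update u ⟨m, hm⟩ a) = typePre m cs u := by
  unfold typePre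
  rw [← Finset.sum_div]
  congr 1
  rw [preCount_split hm cs u]
  push_cast
  rfl

lemma margin {q L n : ℕ} {ε : ℝ} (hq : 3 ≤ q) (hε : 0 < ε) (hn : 0 < n) {m : ℕ} (hm : m < L)
    (cs' : Fin L → Fin n → Fin q)
    (hgoodm : ∀ u : Fin L → Fin q, |typePre m cs' u - 1/(q:ℝ)^m| ≤ epsTol q L ε m)
    (hbad : ∃ u : Fin L → Fin q,
      ¬ (|typePre (m+1) cs' u - 1/(q:ℝ)^(m+1)| ≤ epsTol q L ε (m+1))) :
    ∃ u : Fin L → Fin q,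
      1/(q:ℝ)^(m+1) + epsTol q L ε (m+1) / (2*q) ≤ typePre (m+1) cs' u := by
  obtain ⟨u₀, h0⟩ := hbad
  have hq0 : 0 < q := by omega
  have hqR : (3:ℝ) ≤ q := by exact_mod_cast hq
  have hqR0 : (0:ℝ) < q := by linarith
  set p : ℝ := 1/(q:ℝ)^(m+1) with hp
  set ε1 : ℝ := epsTol q L ε (m+1) with hε1
  have hε1pos : 0 < ε1 := epsTol_pos hq0 hε (m+1)
  have hεm : epsTol q L ε m = ε1 / (4*q) := epsTol_succ ε hq0 hm
  rw [not_le] at h0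
  rcases le_or_gt p (typePre (m+1) cs' u₀) with hcase | hcase
  · refine ⟨u₀, ?_⟩
    have habs : typePre (m+1) cs' u₀ - p = |typePre (m+1) cs' u₀ - p| := by
      rw [abs_of_nonneg (by linarith)]
    have hup : ε1 < typePre (m+1) cs' u₀ - p := by rw [habs]; exact h0
    have : ε1 / (2*q) ≤ ε1 := by
      rw [div_le_iff₀ (by linarith)]
      nlinarith
    linarith
  · -- low deviation case
    have hlow : typePre (m+1) cs' u₀ < p - ε1 := by
      have habs : |typePre (m+1) cs' u₀ - p| = p - typePre (m+1) cs' u₀ := by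
        rw [abs_of_neg (by linarith)]
        ring
      rw [habs] at h0
      linarith
    set a₀ : Fin q := u₀ ⟨m, hm⟩ with ha₀
    have hself : Function.update u₀ ⟨m, hm⟩ a₀ = u₀ := Function.update_eq_self _ _
    have hsum : ∑ a : Fin q, typePre (m+1) cs' (Function.update u₀ ⟨m, hm⟩ a)
        = typePre m cs' u₀ := typePre_split hm cs' u₀
    have herase : ∑ a ∈ Finset.univ.erase a₀, typePre (m+1) cs' (Function.update u₀ ⟨m, hm⟩ a)
        = typePre m cs' u₀ - typePre (m+1) cs' u₀ := by
      rw [Finset.sum_erase_eq_sub (Finset.mem_univ a₀), hsum, hself]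
    have hgm : 1/(q:ℝ)^m - ε1/(4*q) ≤ typePre m cs' u₀ := by
      have := hgoodm u₀
      rw [hεm] at this
      have := abs_le.1 this
      linarith [this.1]
    have hqm : 1/(q:ℝ)^m = q * p := by
      rw [hp, pow_succ]
      field_simp
    have hbound : ((q:ℝ) - 1) * p + (ε1 - ε1/(4*q) - ε1)
        < q * p - ε1/(4*q) - (p - ε1) := by ring_nf; nlinarith
    have hsumlb : ((q:ℝ) - 1) * (p + ε1/(2*q))
        < ∑ a ∈ Finset.univ.erase a₀, typePre (m+1) cs' (Function.update u₀ ⟨m, hm⟩ a) := by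
      rw [herase]
      have key : ((q:ℝ) - 1) * (p + ε1/(2*q)) < q * p - ε1/(4*q) - (p - ε1) := by
        have h1 : ((q:ℝ) - 1) * (p + ε1/(2*q)) = (q-1)*p + (q-1)*ε1/(2*q) := by ring
        have h2 : ((q:ℝ)-1)*ε1/(2*q) < ε1 - ε1/(4*q) := by
          rw [div_lt_iff₀ (by linarith)]
          have : ε1 - ε1/(4*q) = ε1 * (4*q - 1)/(4*q) := by field_simp
          rw [this, div_mul_eq_mul_div, lt_div_iff₀ (by linarith)]
          nlinarith [mul_pos hqR0 hε1pos, mul_pos (mul_pos hqR0 hqR0) hε1pos]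
        nlinarith
      calc ((q:ℝ) - 1) * (p + ε1/(2*q)) < q * p - ε1/(4*q) - (p - ε1) := key
        _ ≤ typePre m cs' u₀ - typePre (m+1) cs' u₀ := by
            rw [← hqm] at *
            have := hgm
            nlinarith [hlow]
    have hconst : ∑ _a ∈ Finset.univ.erase a₀, (p + ε1/(2*q)) = ((q:ℝ)-1) * (p + ε1/(2*q)) := by
      rw [Finset.sum_const, nsmul_eq_mul, Finset.card_erase_of_mem (Finset.mem_univ a₀)]
      simp only [Finset.card_univ, Fintype.card_fin]
      have : ((q - 1 : ℕ) : ℝ) = (q:ℝ) - 1 := by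
        have : 1 ≤ q := by omega
        push_cast [this]
        ring
      rw [this]
    obtain ⟨a, ha, hlt⟩ := Finset.exists_lt_of_sum_lt
      (f := fun _ : Fin q => p + ε1/(2*(q:ℝ)))
      (g := fun a : Fin q => typePre (m+1) cs' (Function.update u₀ ⟨m, hm⟩ a))
      (s := Finset.univ.erase a₀) (by rw [hconst]; exact hsumlb)
    exact ⟨Function.update u₀ ⟨m, hm⟩ a, hlt.le⟩

lemma core {q L n s : ℕ} {ε : ℝ} (hq : 3 ≤ q) (hε : 0 < ε) (hn : 0 < n) (hs : 1 ≤ s)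
    {m : ℕ} (hm : m < L)
    (hn0 : 16 * (s:ℝ) / (epsTol q L ε 1 / (2*q))^2 ≤ n)
    (C : Finset (Fin n → Fin q))
    (hball : ∀ y : Fin n → Fin q,
      (C.filter (fun c => (hammingDist c y : ℝ)
        ≤ (1 - 1/(q:ℝ) - epsTol q L ε 1 / (2*(q:ℝ)) / 8) * n)).card < s)
    (cs : Fin L → Fin n → Fin q) (hgood : GoodTup q n L ε m cs) :
    (C.filter (fun c => ¬ GoodTup q n L ε (m+1) (Function.update cs ⟨m, hm⟩ c))).card
      ≤ q ^ L * s := by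
  classical
  by_contra hcon
  push_neg at hcon
  have hq0 : 0 < q := by omega
  have hqR : (3:ℝ) ≤ q := by exact_mod_cast hq
  have hqR0 : (0:ℝ) < q := by linarith
  have hnR : (0:ℝ) < n := by exact_mod_cast hn
  set B := C.filter (fun c => ¬ GoodTup q n L ε (m+1) (Function.update cs ⟨m, hm⟩ c)) with hB
  set ε1 : ℝ := epsTol q L ε (m+1) with hε1
  have hε1pos : 0 < ε1 := epsTol_pos hq0 hε _
  set η : ℝ := ε1 / (2*(q:ℝ)) with hη
  have hηpos : 0 < η := by positivity
  set η1 : ℝ := epsTol q L ε 1 / (2*(q:ℝ)) with hη1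
  have hη1pos : 0 < η1 := by
    rw [hη1]
    exact div_pos (epsTol_pos (L := L) hq0 hε 1) (by linarith)
  have hη1η : η1 ≤ η := by
    rw [hη1, hη, hε1]
    have := epsTol_mono (L := L) (ε := ε) hq0 hε (Nat.succ_le_succ (Nat.zero_le m))
    gcongr
  set p : ℝ := 1/(q:ℝ)^(m+1) with hp
  -- margin step
  have hmargin : ∀ c ∈ B, ∃ u : Fin L → Fin q,
      p + η ≤ typePre (m+1) (Function.update cs ⟨m, hm⟩ c) u := by
    intro c hc
    have hcB := (Finset.mem_filter.1 hc).2
    have hgoodm' : ∀ u : Fin L → Fin q,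
        |typePre m (Function.update cs ⟨m, hm⟩ c) u - 1/(q:ℝ)^m| ≤ epsTol q L ε m := by
      intro u
      have heq : typePre m (Function.update cs ⟨m, hm⟩ c) u = typePre m cs u := by
        unfold typePre
        rw [preCount_update_lower hm cs c u]
      rw [heq]
      exact hgood u
    have hbad : ∃ u : Fin L → Fin q,
        ¬ (|typePre (m+1) (Function.update cs ⟨m, hm⟩ c) u - 1/(q:ℝ)^(m+1)|
          ≤ epsTol q L ε (m+1)) := by
      by_contra hno
      push_neg at hno
      exact hcB fun u => (hno u)
    exact margin hq hε hn hm _ hgoodm' hbad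
  -- pigeonhole on the chosen pattern
  set U : (Fin n → Fin q) → (Fin L → Fin q) := fun c =>
    if h : ∃ u : Fin L → Fin q,
        p + η ≤ typePre (m+1) (Function.update cs ⟨m, hm⟩ c) u
    then h.choose else (fun _ => ⟨0, hq0⟩) with hU
  have hUspec : ∀ c ∈ B,
      p + η ≤ typePre (m+1) (Function.update cs ⟨m, hm⟩ c) (U c) := by
    intro c hc
    have h := hmargin c hc
    rw [hU]
    simp only [dif_pos h]
    exact h.choose_spec
  have hcard_univ : (Finset.univ : Finset (Fin L → Fin q)).card * s < B.card := by
    rw [Finset.card_univ, show Fintype.card (Fin L → Fin q) = q ^ L by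
      simp [Fintype.card_fun]]
    exact hcon
  obtain ⟨u₀, -, hfib⟩ := Finset.exists_lt_card_fiber_of_mul_lt_card_of_maps_to
    (fun c _ => Finset.mem_univ (U c)) hcard_univ
  obtain ⟨E, hEsub, hEcard⟩ := Finset.exists_subset_card_eq hfib.le
  set a₀ : Fin q := u₀ ⟨m, hm⟩ with ha₀
  set P : Finset (Fin n) := preCount m cs u₀ with hPdef
  have hPle : (P.card : ℝ) ≤ (1/(q:ℝ)^m + ε1/(4*(q:ℝ))) * n := by
    have h := hgood u₀
    rw [epsTol_succ ε hq0 hm, ← hε1] at h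
    have h2 := (abs_le.1 h).2
    unfold typePre at h2
    rw [← hPdef] at h2
    rw [div_sub' hnR.ne'] at h2
    have h3 : (P.card : ℝ) - 1/(q:ℝ)^m * n ≤ ε1/(4*(q:ℝ)) * n := by
      rw [div_le_iff₀ hnR] at h2
      nlinarith [h2]
    nlinarith [h3]
  have hmatch : ∀ c ∈ E,
      (p + η) * n ≤ ((P.filter (fun j => c j = a₀)).card : ℝ) := by
    intro c hc
    have hcfib := hEsub hc
    obtain ⟨hcB, hcU⟩ := Finset.mem_filter.1 hcfib
    have h := hUspec c hcB
    rw [hcU] at h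
    unfold typePre at h
    rw [preCount_update hm cs c u₀, ← hPdef, ← ha₀] at h
    rw [le_div_iff₀ hnR] at h
    exact h
  -- find the center z on the complement of P
  set S : Finset (Fin n) := Finset.univ \ P with hS
  set t : ℝ := η1 * n / 4 with ht
  have hst : (s:ℝ) * n ≤ t^2 := by
    have hd : (0:ℝ) < η1^2 := by positivity
    rw [div_le_iff₀ hd] at hn0
    have : 16 * (s:ℝ) ≤ η1^2 * n := by
      calc 16 * (s:ℝ) ≤ (n:ℝ) * η1^2 := hn0
        _ = η1^2 * n := by ring
    have ht2 : t^2 = η1^2 * n * n / 16 := by rw [ht]; ring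
    rw [ht2]
    rw [le_div_iff₀ (by norm_num : (0:ℝ) < 16)]
    calc (s:ℝ) * n * 16 = (16 * s) * n := by ring
      _ ≤ (η1^2 * n) * n := mul_le_mul_of_nonneg_right this hnR.le
      _ = η1^2 * n * n := by ring
  obtain ⟨z, hz⟩ := exists_good_z hq0 s S t (by positivity) hst E (le_of_eq hEcard)
  set y : Fin n → Fin q := fun j => if j ∈ P then a₀ else z j with hy
  -- all codewords of E are close to y
  have hdist : ∀ c ∈ E, (hammingDist c y : ℝ) ≤ (1 - 1/(q:ℝ) - η1/8) * n := by
    intro c hc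
    set A : Finset (Fin n) := P.filter (fun j => c j = a₀) with hA
    set Bz : Finset (Fin n) := S.filter (fun j => z j = c j) with hBz
    have hAB : Disjoint A Bz := by
      refine Finset.disjoint_left.2 fun j hjA hjB => ?_
      have h1 : j ∈ P := (Finset.mem_filter.1 hjA).1
      have h2 : j ∈ S := (Finset.mem_filter.1 hjB).1
      exact (Finset.mem_sdiff.1 h2).2 h1
    have hsub : A ∪ Bz ⊆ Finset.univ.filter (fun j => c j = y j) := by
      intro j hj
      rcases Finset.mem_union.1 hj with hj | hj
      · obtain ⟨hjP, hceq⟩ := Finset.mem_filter.1 hj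
        refine Finset.mem_filter.2 ⟨Finset.mem_univ _, ?_⟩
        rw [hy]
        simp only
        rw [if_pos hjP]
        exact hceq
      · obtain ⟨hjS, hzeq⟩ := Finset.mem_filter.1 hj
        have hjP : j ∉ P := (Finset.mem_sdiff.1 hjS).2
        refine Finset.mem_filter.2 ⟨Finset.mem_univ _, ?_⟩
        rw [hy]
        simp only
        rw [if_neg hjP]
        exact hzeq.symm
    have hagree : A.card + Bz.card ≤ (Finset.univ.filter (fun j => c j = y j)).card := by
      rw [← Finset.card_union_of_disjoint hAB]
      exact Finset.card_le_card hsub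
    have hdisteq : hammingDist c y
        = (Finset.univ.filter (fun j => ¬ (c j = y j))).card := by
      rw [hammingDist]
    have htotal : (Finset.univ.filter (fun j => c j = y j)).card
        + (Finset.univ.filter (fun j => ¬ (c j = y j))).card = n := by
      rw [Finset.card_filter_add_card_filter_not]
      simp
    have h1 : (hammingDist c y : ℝ) + (A.card : ℝ) + (Bz.card : ℝ) ≤ n := by
      have hnat : hammingDist c y + A.card + Bz.card ≤ n := by omega
      exact_mod_cast hnat
    have hA' : (p + η) * n ≤ (A.card : ℝ) := hmatch c hc
    have hScard : (S.card : ℝ) = (n : ℝ) - P.card := by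
      have hPn : P.card ≤ n := by
        calc P.card ≤ (Finset.univ : Finset (Fin n)).card :=
              Finset.card_le_card (Finset.subset_univ P)
          _ = n := by simp
      have h5 : S.card = n - P.card := by
        rw [hS, Finset.card_sdiff_of_subset (Finset.subset_univ P), Finset.card_univ, Fintype.card_fin]
      rw [h5, Nat.cast_sub hPn]
    have hBz' : ((n:ℝ) - (P.card:ℝ))/q - t ≤ (Bz.card : ℝ) := by
      have := hz c hc
      rw [← hScard]
      exact this
    -- combine
    have hqm : 1/(q:ℝ)^m = q * p := by
      rw [hp, pow_succ]
      field_simp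
    have hPc : (P.card : ℝ)/q ≤ p * n + (η/(2*q)) * n := by
      have hPle' : (P.card : ℝ) ≤ (q * p + ε1/(4*(q:ℝ))) * n := by
        rw [← hqm]
        exact hPle
      have he1 : ε1/(4*(q:ℝ)) = η * q / (2*q) := by
        rw [hη]
        field_simp
        ring
      rw [div_le_iff₀ hqR0]
      calc (P.card : ℝ) ≤ (q * p + ε1/(4*(q:ℝ))) * n := hPle'
        _ = (p * n + (η/(2*q)) * n) * q := by
            rw [he1]
            field_simp
    have hs1 : (η/(2*(q:ℝ))) * n ≤ (η/6) * n := by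
      refine mul_le_mul_of_nonneg_right ?_ hnR.le
      refine div_le_div_of_nonneg_left hηpos.le (by norm_num) (by linarith)
    have hs2 : η1 * n ≤ η * n := mul_le_mul_of_nonneg_right hη1η hnR.le
    have hstep : (hammingDist c y : ℝ) ≤ (n:ℝ) - (p + η) * n - ((n:ℝ) - (P.card:ℝ))/q + t := by
      linarith
    have hexpand : (n:ℝ) - (p + η) * n - ((n:ℝ) - (P.card:ℝ))/q + t
        = (n:ℝ) - p * n - η * n - (n:ℝ)/q + (P.card:ℝ)/q + t := by
      ring
    rw [hexpand] at hstep
    have hfinal : (n:ℝ) - p * n - η * n - (n:ℝ)/q + (P.card:ℝ)/q + t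
        ≤ (1 - 1/(q:ℝ) - η1/8) * n := by
      have ht' : t = η1 * n / 4 := ht
      have hgoal : (1 - 1/(q:ℝ) - η1/8) * n = (n:ℝ) - (n:ℝ)/q - (η1/8) * n := by
        ring
      rw [hgoal, ht']
      have hPc6 : (P.card:ℝ)/q ≤ p * n + (η/6) * n := by linarith
      have hpos : 0 < η1 * n := mul_pos hη1pos hnR
      linarith [hs2, hPc6, hpos]
    exact le_trans hstep hfinal
  -- contradiction with hball
  have hEC : E ⊆ C.filter (fun c => (hammingDist c y : ℝ) ≤ (1 - 1/(q:ℝ) - η1/8) * n) := by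
    intro c hc
    have hcB : c ∈ B := (Finset.mem_filter.1 (hEsub hc)).1
    have hcC : c ∈ C := (Finset.mem_filter.1 hcB).1
    exact Finset.mem_filter.2 ⟨hcC, hdist c hc⟩
  have hcount := hball y
  have : s ≤ (C.filter (fun c => (hammingDist c y : ℝ) ≤ (1 - 1/(q:ℝ) - η1/8) * n)).card := by
    rw [← hEcard]
    exact Finset.card_le_card hEC
  omega

lemma chain {q n L : ℕ} {ε : ℝ} (hq : 0 < q) (hε : 0 < ε) (hn : 0 < n)
    (cs : Fin L → Fin n → Fin q) :
    ∀ k : ℕ, ¬ GoodTup q n L ε k cs →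
      ∃ m : ℕ, m < k ∧ GoodTup q n L ε m cs ∧ ¬ GoodTup q n L ε (m+1) cs := by
  intro k
  induction k with
  | zero => intro hk; exact absurd (goodTup_zero hq hε hn cs) hk
  | succ k ih =>
    intro hk
    by_cases hgk : GoodTup q n L ε k cs
    · exact ⟨k, Nat.lt_succ_self k, hgk, hk⟩
    · obtain ⟨m, hm1, hm2, hm3⟩ := ih hgk
      exact ⟨m, Nat.lt_succ_of_lt hm1, hm2, hm3⟩

lemma goodTup_congr {q n L : ℕ} {ε : ℝ} {m : ℕ} {cs cs' : Fin L → Fin n → Fin q}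
    (h : ∀ i : Fin L, (i : ℕ) < m → cs i = cs' i) :
    GoodTup q n L ε m cs ↔ GoodTup q n L ε m cs' := by
  unfold GoodTup
  constructor <;> intro hg u
  · rw [typePre_congr u (fun i hi => (h i hi).symm)]
    exact hg u
  · rw [typePre_congr u h]
    exact hg u

lemma card_piFinset_special {q n L : ℕ} (i₀ : Fin L) (C : Finset (Fin n → Fin q))
    (c₀ : Fin n → Fin q) :
    (Fintype.piFinset (fun i : Fin L =>
      if i = i₀ then ({c₀} : Finset (Fin n → Fin q)) else C)).card = C.card ^ (L - 1) := by
  rw [Fintype.card_piFinset]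
  rw [← Finset.prod_erase_mul _ _ (Finset.mem_univ i₀)]
  rw [if_pos rfl, Finset.card_singleton, mul_one]
  rw [Finset.prod_congr rfl (fun i hi => ?_), Finset.prod_const,
    Finset.card_erase_of_mem (Finset.mem_univ i₀), Finset.card_univ, Fintype.card_fin]
  rw [if_neg (Finset.mem_erase.1 hi).1]

lemma count_bad_level {q L n s : ℕ} {ε : ℝ} (hq : 3 ≤ q) (hε : 0 < ε) (hn : 0 < n) (hs : 1 ≤ s)
    {m : ℕ} (hm : m < L)
    (hn0 : 16 * (s:ℝ) / (epsTol q L ε 1 / (2*q))^2 ≤ n)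
    (C : Finset (Fin n → Fin q)) (hC : C.Nonempty)
    (hball : ∀ y : Fin n → Fin q,
      (C.filter (fun c => (hammingDist c y : ℝ)
        ≤ (1 - 1/(q:ℝ) - epsTol q L ε 1 / (2*(q:ℝ)) / 8) * n)).card < s) :
    ((Fintype.piFinset fun _ : Fin L => C).filter
      (fun cs => GoodTup q n L ε m cs ∧ ¬ GoodTup q n L ε (m+1) cs)).card
      ≤ (q ^ L * s) * C.card ^ (L - 1) := by
  classical
  obtain ⟨c₀, hc₀⟩ := hC
  set i₀ : Fin L := ⟨m, hm⟩ with hi₀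
  set T := (Fintype.piFinset fun _ : Fin L => C).filter
    (fun cs => GoodTup q n L ε m cs ∧ ¬ GoodTup q n L ε (m+1) cs) with hT
  set F : (Fin L → Fin n → Fin q) → (Fin L → Fin n → Fin q) :=
    fun cs => Function.update cs i₀ c₀ with hF
  have hfibers : ∀ g ∈ T.image F, (T.filter fun cs => F cs = g).card ≤ q ^ L * s := by
    intro g hg
    by_cases hne : (T.filter fun cs => F cs = g).Nonempty
    · obtain ⟨cs₁, hcs₁⟩ := hne
      obtain ⟨hcs₁T, hcs₁F⟩ := Finset.mem_filter.1 hcs₁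
      obtain ⟨hcs₁pi, hcs₁good, hcs₁bad⟩ := Finset.mem_filter.1 hcs₁T
      have hcongr : ∀ i : Fin L, (i:ℕ) < m → cs₁ i = g i := by
        intro i hi
        have hne' : i ≠ i₀ := by
          intro he
          rw [he, hi₀] at hi
          exact absurd hi (by simp)
        rw [← hcs₁F]
        show cs₁ i = Function.update cs₁ i₀ c₀ i
        rw [Function.update_of_ne hne']
      have hgoodg : GoodTup q n L ε m g := (goodTup_congr hcongr).1 hcs₁good
      have hcore := core hq hε hn hs hm hn0 C hball g hgoodg
      refine le_trans (Finset.card_le_card_of_injOn (fun cs => cs i₀) ?_ ?_) hcore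
      · -- maps to
        intro cs hcs
        obtain ⟨hcsT, hcsF⟩ := Finset.mem_filter.1 hcs
        obtain ⟨hcspi, hcsgood, hcsbad⟩ := Finset.mem_filter.1 hcsT
        refine Finset.mem_filter.2 ⟨?_, ?_⟩
        · exact Fintype.mem_piFinset.1 hcspi i₀
        · show ¬ GoodTup q n L ε (m+1) (Function.update g i₀ (cs i₀))
          have hrec : Function.update g i₀ (cs i₀) = cs := by
            rw [← hcsF]
            show Function.update (Function.update cs i₀ c₀) i₀ (cs i₀) = cs
            rw [Function.update_idem, Function.update_eq_self]
          rw [hrec]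
          exact hcsbad
      · -- injective on
        intro cs hcs cs' hcs' heq
        obtain ⟨-, hcsF⟩ := Finset.mem_filter.1 hcs
        obtain ⟨-, hcs'F⟩ := Finset.mem_filter.1 hcs'
        funext i
        by_cases hi : i = i₀
        · rw [hi]; exact heq
        · have h1 : Function.update cs i₀ c₀ i = Function.update cs' i₀ c₀ i :=
            congrFun (hcsF.trans hcs'F.symm) i
          rwa [Function.update_of_ne hi, Function.update_of_ne hi] at h1
    · rw [Finset.not_nonempty_iff_eq_empty] at hne
      rw [hne]
      simp
  have himage : (T.image F).card ≤ C.card ^ (L - 1) := by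
    rw [← card_piFinset_special i₀ C c₀]
    refine Finset.card_le_card ?_
    intro g hg
    obtain ⟨cs, hcs, rfl⟩ := Finset.mem_image.1 hg
    obtain ⟨hcspi, -⟩ := Finset.mem_filter.1 hcs
    rw [Fintype.mem_piFinset]
    intro i
    by_cases hi : i = i₀
    · rw [hi, if_pos rfl]
      show Function.update cs i₀ c₀ i₀ ∈ ({c₀} : Finset (Fin n → Fin q))
      rw [Function.update_self]
      exact Finset.mem_singleton_self c₀
    · rw [if_neg hi]
      show Function.update cs i₀ c₀ i ∈ C
      rw [Function.update_of_ne hi]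
      exact Fintype.mem_piFinset.1 hcspi i
  calc T.card ≤ (q ^ L * s) * (T.image F).card :=
        Finset.card_le_mul_card_image T (q ^ L * s) hfibers
    _ ≤ (q ^ L * s) * C.card ^ (L - 1) := Nat.mul_le_mul_left _ himage

lemma count_noninj {q n L : ℕ} (C : Finset (Fin n → Fin q)) (hC : C.Nonempty) :
    ((Fintype.piFinset fun _ : Fin L => C).filter
      (fun cs => ¬ Function.Injective cs)).card ≤ (L * L) * C.card ^ (L - 1) := by
  classical
  obtain ⟨c₀, hc₀⟩ := hC
  have hsub : (Fintype.piFinset fun _ : Fin L => C).filter (fun cs => ¬ Function.Injective cs)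
      ⊆ (Finset.univ.offDiag).biUnion (fun p : (Fin L) × (Fin L) =>
          (Fintype.piFinset fun _ : Fin L => C).filter (fun cs => cs p.1 = cs p.2)) := by
    intro cs hcs
    obtain ⟨hcspi, hcsnoninj⟩ := Finset.mem_filter.1 hcs
    obtain ⟨a, b, hab, hne⟩ := Function.not_injective_iff.1 hcsnoninj
    refine Finset.mem_biUnion.2 ⟨(a, b), ?_, Finset.mem_filter.2 ⟨hcspi, hab⟩⟩
    exact Finset.mem_offDiag.2 ⟨Finset.mem_univ _, Finset.mem_univ _, hne⟩
  have hone : ∀ p : (Fin L) × (Fin L), p ∈ (Finset.univ : Finset (Fin L)).offDiag →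
      ((Fintype.piFinset fun _ : Fin L => C).filter (fun cs => cs p.1 = cs p.2)).card
        ≤ C.card ^ (L - 1) := by
    intro p hp
    have hne : p.1 ≠ p.2 := (Finset.mem_offDiag.1 hp).2.2
    rw [← card_piFinset_special p.2 C c₀]
    refine Finset.card_le_card_of_injOn (fun cs => Function.update cs p.2 c₀) ?_ ?_
    · intro cs hcs
      obtain ⟨hcspi, -⟩ := Finset.mem_filter.1 hcs
      rw [Finset.mem_coe, Fintype.mem_piFinset]
      intro i
      by_cases hi : i = p.2
      · rw [hi, if_pos rfl]
        show Function.update cs p.2 c₀ p.2 ∈ ({c₀} : Finset (Fin n → Fin q))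
        rw [Function.update_self]
        exact Finset.mem_singleton_self c₀
      · rw [if_neg hi]
        show Function.update cs p.2 c₀ i ∈ C
        rw [Function.update_of_ne hi]
        exact Fintype.mem_piFinset.1 hcspi i
    · intro cs hcs cs' hcs' heq
      obtain ⟨-, h1⟩ := Finset.mem_filter.1 hcs
      obtain ⟨-, h2⟩ := Finset.mem_filter.1 hcs'
      funext i
      by_cases hi : i = p.2
      · have ha : Function.update cs p.2 c₀ p.1 = Function.update cs' p.2 c₀ p.1 :=
          congrFun heq p.1
        rw [Function.update_of_ne hne, Function.update_of_ne hne] at ha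
        rw [hi, ← h1, ← h2]
        exact ha
      · have hb : Function.update cs p.2 c₀ i = Function.update cs' p.2 c₀ i :=
          congrFun heq i
        rwa [Function.update_of_ne hi, Function.update_of_ne hi] at hb
  calc ((Fintype.piFinset fun _ : Fin L => C).filter (fun cs => ¬ Function.Injective cs)).card
      ≤ ((Finset.univ.offDiag).biUnion (fun p : (Fin L) × (Fin L) =>
          (Fintype.piFinset fun _ : Fin L => C).filter (fun cs => cs p.1 = cs p.2))).card :=
        Finset.card_le_card hsub
    _ ≤ ∑ p ∈ Finset.univ.offDiag, ((Fintype.piFinset fun _ : Fin L => C).filter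
          (fun cs => cs p.1 = cs p.2)).card := Finset.card_biUnion_le
    _ ≤ ∑ _p ∈ (Finset.univ : Finset (Fin L)).offDiag, C.card ^ (L - 1) :=
        Finset.sum_le_sum hone
    _ ≤ (L * L) * C.card ^ (L - 1) := by
        rw [Finset.sum_const, smul_eq_mul]
        refine Nat.mul_le_mul_right _ ?_
        calc (Finset.univ : Finset (Fin L)).offDiag.card
            ≤ ((Finset.univ : Finset (Fin L)) ×ˢ Finset.univ).card := by
              refine Finset.card_le_card ?_
              intro p hp
              exact Finset.mem_product.2 ⟨Finset.mem_univ _, Finset.mem_univ _⟩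
          _ = L * L := by simp
theorem abundance_main (q L : ℕ) (hq : 3 ≤ q) (hL : 2 ≤ L) :
    ∀ ε : ℝ, 0 < ε → ∃ δ : ℝ, 0 < δ ∧ ∀ s : ℕ, 1 ≤ s → ∃ M0 : ℕ, ∃ c : ℝ,
      ∀ n : ℕ, 1 ≤ n → ∀ C : Finset (Fin n → Fin q), M0 ≤ C.card →
        ((∃ C' ⊆ C, s ≤ C'.card ∧ radhCode C' ≤ 1 - 1 / (q : ℝ) - δ) ∨
          (C.card : ℝ) ^ L - c * (C.card : ℝ) ^ (L - 1) ≤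
            (((Fintype.piFinset fun _ : Fin L => C).filter fun cs =>
                Function.Injective cs ∧
                (∀ u : Fin L → Fin q, |typeu cs u - 1 / (q : ℝ) ^ L| ≤ ε) ∧
                (∀ ω : Fin L → ℝ, IsDist ω →
                  |radOmega ω (fun i j => phi q (cs i j)) -
                      fF (fun _ : Fin q => 1 / (q : ℝ)) ω| ≤ (q : ℝ) ^ L * ε)).card : ℝ)) := by
  intro ε hε
  have hq0 : 0 < q := by omega
  have hqR0 : (0:ℝ) < q := by exact_mod_cast hq0
  set η1 : ℝ := epsTol q L ε 1 / (2*(q:ℝ)) with hη1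
  have hη1pos : 0 < η1 := by
    rw [hη1]
    exact div_pos (epsTol_pos (L := L) hq0 hε 1) (by linarith)
  refine ⟨η1 / 8, by positivity, ?_⟩
  intro s hs
  set n₀ : ℕ := Nat.ceil (16*(s:ℝ)/η1^2) with hn₀
  refine ⟨q^(n₀+1), ((L*(q^L*s) + L*L : ℕ) : ℝ), ?_⟩
  intro n hn C hM
  have hnR : (0:ℝ) < n := by exact_mod_cast hn
  have hn' : 0 < n := hn
  by_cases hopt : ∃ C' ⊆ C, s ≤ C'.card ∧ radhCode C' ≤ 1 - 1/(q:ℝ) - η1/8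
  · left; exact hopt
  right
  push_neg at hopt
  have hMn : C.card ≤ q ^ n := by
    calc C.card ≤ Fintype.card (Fin n → Fin q) := Finset.card_le_univ C
      _ = q ^ n := by simp [Fintype.card_fun]
  have hnn₀ : n₀ + 1 ≤ n := by
    have h1 : q ^ (n₀+1) ≤ q ^ n := le_trans hM hMn
    exact (Nat.pow_le_pow_iff_right (by omega : 1 < q)).1 h1
  have hn0 : 16 * (s:ℝ) / η1^2 ≤ (n:ℝ) := by
    calc 16*(s:ℝ)/η1^2 ≤ (n₀ : ℝ) := Nat.le_ceil _
      _ ≤ (n:ℝ) := by exact_mod_cast (by omega : n₀ ≤ n)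
  have hCne : C.Nonempty := by
    rw [← Finset.card_pos]
    have : 0 < q^(n₀+1) := Nat.pow_pos hq0
    omega
  -- no small ball contains s codewords
  have hball : ∀ y : Fin n → Fin q,
      (C.filter (fun c => (hammingDist c y : ℝ) ≤ (1 - 1/(q:ℝ) - η1/8) * n)).card < s := by
    intro y
    by_contra hbig
    push_neg at hbig
    obtain ⟨E, hEsub, hEcard⟩ := Finset.exists_subset_card_eq hbig
    have hEC : E ⊆ C := hEsub.trans (Finset.filter_subset _ _)
    have hEne : E.Nonempty := Finset.card_pos.1 (by omega)
    have hrad : radhCode E ≤ 1 - 1/(q:ℝ) - η1/8 := by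
      have hle := radh_le hn' E hEne y ((1 - 1/(q:ℝ) - η1/8) * n)
        (fun c hc => (Finset.mem_filter.1 (hEsub hc)).2)
      calc radhCode E ≤ ((1 - 1/(q:ℝ) - η1/8) * n)/n := hle
        _ = 1 - 1/(q:ℝ) - η1/8 := by field_simp
    have := hopt E hEC hEcard.ge
    linarith
  -- counting
  set T := Fintype.piFinset fun _ : Fin L => C with hT
  set Pg := T.filter (fun cs => Function.Injective cs ∧ GoodTup q n L ε L cs) with hPg
  have hsubgoal : Pg ⊆ T.filter (fun cs =>
      Function.Injective cs ∧
      (∀ u : Fin L → Fin q, |typeu cs u - 1 / (q : ℝ) ^ L| ≤ ε) ∧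
      (∀ ω : Fin L → ℝ, IsDist ω →
        |radOmega ω (fun i j => phi q (cs i j)) -
            fF (fun _ : Fin q => 1 / (q : ℝ)) ω| ≤ (q : ℝ) ^ L * ε)) := by
    intro cs hcs
    obtain ⟨hpi, hinj, hgood⟩ := Finset.mem_filter.1 hcs
    have htype : ∀ u : Fin L → Fin q, |typeu cs u - 1/(q:ℝ)^L| ≤ ε := by
      intro u
      have h := hgood u
      rw [epsTol_top] at h
      unfold typePre at h
      rw [preCount_top] at h
      exact h
    exact Finset.mem_filter.2 ⟨hpi, hinj, htype,
      fun ω hω => omega_bound hq0 hn' cs htype ω hω⟩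
  have hbad1 : (T.filter (fun cs => ¬ GoodTup q n L ε L cs)).card
      ≤ L * ((q^L*s) * C.card^(L-1)) := by
    have hsub2 : T.filter (fun cs => ¬ GoodTup q n L ε L cs)
        ⊆ (Finset.range L).biUnion (fun m => T.filter
            (fun cs => GoodTup q n L ε m cs ∧ ¬ GoodTup q n L ε (m+1) cs)) := by
      intro cs hcs
      obtain ⟨hpi, hbadL⟩ := Finset.mem_filter.1 hcs
      obtain ⟨m, hm, h2, h3⟩ := chain hq0 hε hn' cs L hbadL
      exact Finset.mem_biUnion.2 ⟨m, Finset.mem_range.2 hm,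
        Finset.mem_filter.2 ⟨hpi, h2, h3⟩⟩
    calc (T.filter (fun cs => ¬ GoodTup q n L ε L cs)).card
        ≤ ((Finset.range L).biUnion (fun m => T.filter
            (fun cs => GoodTup q n L ε m cs ∧ ¬ GoodTup q n L ε (m+1) cs))).card :=
          Finset.card_le_card hsub2
      _ ≤ ∑ m ∈ Finset.range L, (T.filter
            (fun cs => GoodTup q n L ε m cs ∧ ¬ GoodTup q n L ε (m+1) cs)).card :=
          Finset.card_biUnion_le
      _ ≤ ∑ _m ∈ Finset.range L, (q^L*s) * C.card^(L-1) := by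
          refine Finset.sum_le_sum fun m hm => ?_
          exact count_bad_level hq hε hn' hs (Finset.mem_range.1 hm) hn0 C hCne hball
      _ = L * ((q^L*s) * C.card^(L-1)) := by
          rw [Finset.sum_const, Finset.card_range, smul_eq_mul]
  have hbad2 : (T.filter (fun cs => ¬ Function.Injective cs)).card
      ≤ (L * L) * C.card^(L-1) := count_noninj C hCne
  have hbadsub : T.filter (fun cs => ¬ (Function.Injective cs ∧ GoodTup q n L ε L cs))
      ⊆ (T.filter (fun cs => ¬ Function.Injective cs))
        ∪ (T.filter (fun cs => ¬ GoodTup q n L ε L cs)) := by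
    intro cs hcs
    obtain ⟨hpi, hnand⟩ := Finset.mem_filter.1 hcs
    rcases not_and_or.1 hnand with h | h
    · exact Finset.mem_union_left _ (Finset.mem_filter.2 ⟨hpi, h⟩)
    · exact Finset.mem_union_right _ (Finset.mem_filter.2 ⟨hpi, h⟩)
  have hsplit : Pg.card
      + (T.filter (fun cs => ¬ (Function.Injective cs ∧ GoodTup q n L ε L cs))).card
      = T.card := by
    rw [hPg]
    exact Finset.card_filter_add_card_filter_not _
  have hTcard : T.card = C.card ^ L := by
    rw [hT, Fintype.card_piFinset]
    rw [Finset.prod_const, Finset.card_univ, Fintype.card_fin]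
  have hbadtot : (T.filter (fun cs =>
      ¬ (Function.Injective cs ∧ GoodTup q n L ε L cs))).card
      ≤ (L*(q^L*s) + L*L) * C.card^(L-1) := by
    calc (T.filter (fun cs => ¬ (Function.Injective cs ∧ GoodTup q n L ε L cs))).card
        ≤ ((T.filter (fun cs => ¬ Function.Injective cs))
          ∪ (T.filter (fun cs => ¬ GoodTup q n L ε L cs))).card :=
          Finset.card_le_card hbadsub
      _ ≤ (T.filter (fun cs => ¬ Function.Injective cs)).card
          + (T.filter (fun cs => ¬ GoodTup q n L ε L cs)).card :=
          Finset.card_union_le _ _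
      _ ≤ (L * L) * C.card^(L-1) + L * ((q^L*s) * C.card^(L-1)) := add_le_add hbad2 hbad1
      _ = (L*(q^L*s) + L*L) * C.card^(L-1) := by ring
  have hN : C.card ^ L ≤ Pg.card + (L*(q^L*s) + L*L) * C.card^(L-1) := by
    omega
  have hgoal : Pg.card ≤ ((T.filter fun cs =>
      Function.Injective cs ∧
      (∀ u : Fin L → Fin q, |typeu cs u - 1 / (q : ℝ) ^ L| ≤ ε) ∧
      (∀ ω : Fin L → ℝ, IsDist ω →
        |radOmega ω (fun i j => phi q (cs i j)) -
            fF (fun _ : Fin q => 1 / (q : ℝ)) ω| ≤ (q : ℝ) ^ L * ε)).card) :=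
    Finset.card_le_card hsubgoal
  have hNR : (C.card : ℝ) ^ L ≤ (Pg.card : ℝ)
      + ((L*(q^L*s) + L*L : ℕ) : ℝ) * (C.card:ℝ)^(L-1) := by
    exact_mod_cast hN
  have hgR : (Pg.card : ℝ) ≤ ((T.filter fun cs =>
      Function.Injective cs ∧
      (∀ u : Fin L → Fin q, |typeu cs u - 1 / (q : ℝ) ^ L| ≤ ε) ∧
      (∀ ω : Fin L → ℝ, IsDist ω →
        |radOmega ω (fun i j => phi q (cs i j)) -
            fF (fun _ : Fin q => 1 / (q : ℝ)) ω| ≤ (q : ℝ) ^ L * ε)).card : ℝ) := by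
    exact_mod_cast hgoal
  linarith


end Aux

theorem abundance_of_random_like_tuples (q L : ℕ) (hq : 3 ≤ q) (hL : 2 ≤ L) :
    ∀ ε : ℝ, 0 < ε → ∃ δ : ℝ, 0 < δ ∧ ∀ s : ℕ, 1 ≤ s → ∃ M0 : ℕ, ∃ c : ℝ,
      ∀ n : ℕ, 1 ≤ n → ∀ C : Finset (Fin n → Fin q), M0 ≤ C.card →
        ((∃ C' ⊆ C, s ≤ C'.card ∧ radhCode C' ≤ 1 - 1 / (q : ℝ) - δ) ∨
          (C.card : ℝ) ^ L - c * (C.card : ℝ) ^ (L - 1) ≤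
            (((Fintype.piFinset fun _ : Fin L => C).filter fun cs =>
                Function.Injective cs ∧
                (∀ u : Fin L → Fin q, |typeu cs u - 1 / (q : ℝ) ^ L| ≤ ε) ∧
                (∀ ω : Fin L → ℝ, IsDist ω →
                  |radOmega ω (fun i j => phi q (cs i j)) -
                      fF (fun _ : Fin q => 1 / (q : ℝ)) ω| ≤ (q : ℝ) ^ L * ε)).card : ℝ)) :=
  abundance_main q L hq hL
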